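/- Let α ∈ (1,2], λ > 0, c > 0, t > 0 and w > 0. Then ∑_{k=0}^∞ (kα/2 + 1)(kα/2) · w^{kα-2} (λ t^{α/2})^k / (π² (ct)^{kα+2} Γ(kα/2 + 1)) = [λ / (π² c^{2+α} t^{2+α/2} w^{2-α})] · [ E_{α/2, α/2-1}((λ/(c^α t^{α/2})) w^α) + 2 E_{α/2, α/2}((λ/(c^α t^{α/2})) w^α) ]. (With w = √(c²t² - ‖x‖²), ‖x‖ < ct, x ∈ ℝ⁴, this is the closed form of the absolutely continuous component, up to the normalizing factor E_{α/2,1}(λ t^{α/2}), of the density of the fractional random flight in ℝ⁴.) -/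
import Mathlib

open Real

section Aux
open Filter Nat

lemma aux_summable (A b z : ℝ) (hA : 1/2 < A) (hz : 0 ≤ z) :
    Summable (fun k : ℕ => z ^ k / Real.Gamma (A * k + b)) := by
  set Q : ℝ := (max 1 (2 * z)) ^ 3 with hQdef
  have hQ1 : (1:ℝ) ≤ max 1 (2*z) := le_max_left _ _
  have hQ0 : 0 ≤ Q := by positivity
  -- eventually Q^n ≤ n!
  obtain ⟨N₁, hN₁⟩ : ∃ N₁ : ℕ, ∀ n ≥ N₁, Q ^ n ≤ (n ! : ℝ) := by
    have h := (Real.summable_pow_div_factorial Q).tendsto_atTop_zero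
    have h2 := h.eventually (eventually_le_nhds (show (0:ℝ) < 1 by norm_num))
    rw [eventually_atTop] at h2
    obtain ⟨N₁, hN₁⟩ := h2
    refine ⟨N₁, fun n hn => ?_⟩
    have := hN₁ n hn
    have hfac : (0:ℝ) < n ! := by positivity
    calc Q ^ n = Q ^ n / n ! * n ! := by field_simp
    _ ≤ 1 * n ! := by apply mul_le_mul_of_nonneg_right this hfac.le
    _ = n ! := one_mul _
  -- eventual bound
  have hev : ∀ᶠ k : ℕ in atTop, ((N₁:ℝ) + 3 ≤ A * k + b ∧ (k:ℝ)/3 + 2 ≤ A * k + b) := by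
    have h1 : Tendsto (fun k : ℕ => A * k + b) atTop atTop := by
      apply tendsto_atTop_add_const_right
      exact (tendsto_natCast_atTop_atTop).const_mul_atTop (by linarith)
    have h2 : Tendsto (fun k : ℕ => (A - 1/3) * k + (b - 2)) atTop atTop := by
      apply tendsto_atTop_add_const_right
      exact (tendsto_natCast_atTop_atTop).const_mul_atTop (by linarith)
    filter_upwards [h1.eventually_ge_atTop ((N₁:ℝ)+3), h2.eventually_ge_atTop 0] with k hk1 hk2
    exact ⟨hk1, by linarith⟩
  have hbound : ∀ᶠ k : ℕ in atTop, ‖z ^ k / Real.Gamma (A * k + b)‖ ≤ 1 * ‖(1/2 : ℝ) ^ k‖ := by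
    filter_upwards [hev] with k ⟨hk1, hk2⟩
    set x : ℝ := A * k + b with hx
    have hx2 : (2:ℝ) ≤ x := by have : (0:ℝ) ≤ (N₁:ℝ) := Nat.cast_nonneg _; linarith
    have hΓpos : 0 < Real.Gamma x := Real.Gamma_pos_of_pos (by linarith)
    set n : ℕ := ⌊x⌋₊ - 1 with hn
    have hfl : 1 ≤ ⌊x⌋₊ := by
      rw [Nat.one_le_iff_ne_zero, ← Nat.pos_iff_ne_zero, Nat.floor_pos]; linarith
    have hncast : (n:ℝ) + 1 = (⌊x⌋₊ : ℝ) := by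
      rw [hn]; push_cast [Nat.cast_sub hfl]; ring
    have hfl_le : ((⌊x⌋₊ : ℝ)) ≤ x := Nat.floor_le (by linarith)
    have hfl_gt : x - 1 < (⌊x⌋₊ : ℝ) := by
      have := Nat.lt_floor_add_one x; linarith
    -- Gamma x ≥ n !
    have hΓge : (n ! : ℝ) ≤ Real.Gamma x := by
      have h2le : (2:ℝ) ≤ ((⌊x⌋₊:ℝ)) := by linarith
      have hmono := Real.Gamma_strictMonoOn_Ici.monotoneOn
        (Set.mem_Ici.2 h2le) (Set.mem_Ici.2 hx2) hfl_le
      rw [← hncast] at hmono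
      rwa [Real.Gamma_nat_eq_factorial] at hmono
    -- n ≥ N₁
    have hnN : N₁ ≤ n := by
      have : (N₁:ℝ) + 2 < (⌊x⌋₊:ℝ) := by linarith
      have h2 : N₁ + 2 < ⌊x⌋₊ := by exact_mod_cast this
      omega
    -- k ≤ 3 * n
    have hk3 : (k:ℝ) ≤ 3 * n := by
      have : x - 2 ≤ (n:ℝ) := by linarith
      linarith
    have hk3' : k ≤ 3 * n := by exact_mod_cast hk3
    -- (2z)^k ≤ Γ x
    have hyk : (2*z) ^ k ≤ Real.Gamma x := by
      calc (2*z) ^ k ≤ (max 1 (2*z)) ^ k := by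
            apply pow_le_pow_left₀ (by linarith) (le_max_right _ _)
      _ ≤ (max 1 (2*z)) ^ (3*n) := pow_le_pow_right₀ hQ1 hk3'
      _ = Q ^ n := by rw [hQdef, ← pow_mul, Nat.mul_comm]
      _ ≤ (n ! : ℝ) := hN₁ n hnN
      _ ≤ Real.Gamma x := hΓge
    have hzk : z ^ k / Real.Gamma x ≤ (1/2 : ℝ) ^ k := by
      rw [div_le_iff₀ hΓpos]
      calc z ^ k = (1/2:ℝ)^k * (2*z)^k := by
            rw [← mul_pow]; ring_nf
      _ ≤ (1/2:ℝ)^k * Real.Gamma x := by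
            apply mul_le_mul_of_nonneg_left hyk (by positivity)
    rw [norm_div, Real.norm_eq_abs, Real.norm_eq_abs, Real.norm_eq_abs, abs_of_nonneg (pow_nonneg hz k),
      abs_of_nonneg hΓpos.le, abs_of_nonneg (by positivity : (0:ℝ) ≤ (1/2:ℝ)^k), one_mul]
    exact hzk
  exact summable_of_isBigO_nat (summable_geometric_of_lt_one (by norm_num) (by norm_num))
    (Asymptotics.isBigO_iff.2 ⟨1, hbound⟩)

end Aux

/-- Two-parameter Mittag-Leffler function `E_{a,b}(z) = ∑ z^k / Γ(ak+b)`. -/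
noncomputable def ML (a b z : ℝ) : ℝ := ∑' k : ℕ, z ^ k / Real.Gamma (a * (k : ℝ) + b)

theorem stmt19 (a lam c t w : ℝ) (ha : 1 < a ∧ a ≤ 2) (hlam : 0 < lam) (hc : 0 < c)
    (ht : 0 < t) (hw : 0 < w) :
    (∑' k : ℕ, ((k : ℝ) * a / 2 + 1) * ((k : ℝ) * a / 2) * w ^ ((k : ℝ) * a - 2) *
        (lam * t ^ (a / 2)) ^ k /
        (π ^ 2 * (c * t) ^ ((k : ℝ) * a + 2) * Real.Gamma ((k : ℝ) * a / 2 + 1)))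
      = lam / (π ^ 2 * c ^ (2 + a) * t ^ (2 + a / 2) * w ^ (2 - a)) *
        (ML (a / 2) (a / 2 - 1) (lam / (c ^ a * t ^ (a / 2)) * w ^ a)
          + 2 * ML (a / 2) (a / 2) (lam / (c ^ a * t ^ (a / 2)) * w ^ a)) := by
  obtain ⟨ha1, ha2⟩ := ha
  set z : ℝ := lam / (c ^ a * t ^ (a / 2)) * w ^ a with hzdef
  set pre : ℝ := lam / (π ^ 2 * c ^ (2 + a) * t ^ (2 + a / 2) * w ^ (2 - a)) with hpredef
  have hπ : (0:ℝ) < π := pi_pos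
  have hz : 0 < z := by positivity
  have hpre : 0 < pre := by positivity
  set f : ℕ → ℝ := fun k => ((k : ℝ) * a / 2 + 1) * ((k : ℝ) * a / 2) * w ^ ((k : ℝ) * a - 2) *
        (lam * t ^ (a / 2)) ^ k /
        (π ^ 2 * (c * t) ^ ((k : ℝ) * a + 2) * Real.Gamma ((k : ℝ) * a / 2 + 1)) with hfdef
  set g1 : ℕ → ℝ := fun k => z ^ k / Real.Gamma (a / 2 * (k:ℝ) + (a / 2 - 1)) with hg1
  set g2 : ℕ → ℝ := fun k => z ^ k / Real.Gamma (a / 2 * (k:ℝ) + a / 2) with hg2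
  have hsum1 : Summable g1 := aux_summable (a/2) (a/2-1) z (by linarith) hz.le
  have hsum2 : Summable g2 := aux_summable (a/2) (a/2) z (by linarith) hz.le
  -- the rpow bookkeeping
  have key : ∀ k : ℕ, w ^ (((k:ℝ)+1)*a - 2) * (lam * t^(a/2))^(k+1) /
      (π^2 * (c*t)^(((k:ℝ)+1)*a + 2)) = pre * z ^ k := by
    intro k
    have hL : 0 < w ^ (((k:ℝ)+1)*a - 2) * (lam * t^(a/2))^(k+1) /
        (π^2 * (c*t)^(((k:ℝ)+1)*a + 2)) := by positivity
    have hR : 0 < pre * z ^ k := by positivity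
    refine Real.log_injOn_pos (Set.mem_Ioi.2 hL) (Set.mem_Ioi.2 hR) ?_
    rw [hpredef, hzdef]
    simp (disch := positivity) only [Real.log_mul, Real.log_div, Real.log_pow, Real.log_rpow]
    push_cast
    ring
  -- the Gamma identity
  have gkey : ∀ m : ℝ, 1/2 < m → (m+1) * m / Real.Gamma (m+1) = 1 / Real.Gamma (m-1) + 2 / Real.Gamma m := by
    intro m hm
    have hm0 : m ≠ 0 := by intro h; rw [h] at hm; norm_num at hm
    have hΓ : Real.Gamma (m+1) = m * Real.Gamma m := Real.Gamma_add_one hm0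
    have hΓmpos : 0 < Real.Gamma m := Real.Gamma_pos_of_pos (by linarith)
    by_cases hm1 : m = 1
    · rw [hm1]
      norm_num [Real.Gamma_two, Real.Gamma_one, Real.Gamma_zero]
    · have hm1' : m - 1 ≠ 0 := sub_ne_zero.2 hm1
      have hΓ2 : Real.Gamma m = (m-1) * Real.Gamma (m-1) := by
        have := Real.Gamma_add_one hm1'
        rwa [sub_add_cancel] at this
      have hΓm1ne : Real.Gamma (m-1) ≠ 0 := by
        apply Real.Gamma_ne_zero
        intro n
        match n with
        | 0 => simpa using hm1'
        | (n+1) => push_cast; intro h; have : (0:ℝ) ≤ (n:ℝ) := Nat.cast_nonneg n; linarith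
      rw [hΓ, hΓ2]
      field_simp
      ring
  -- termwise identity
  have hterm : ∀ k : ℕ, f (k+1) = pre * g1 k + pre * 2 * g2 k := by
    intro k
    have hcast : ((k+1 : ℕ) : ℝ) = (k:ℝ) + 1 := by push_cast; ring
    simp only [hfdef, hg1, hg2, hcast]
    set m : ℝ := ((k:ℝ)+1) * a / 2 with hmdef
    have hm : 1/2 < m := by
      rw [hmdef]
      have h1 : (1:ℝ) ≤ (k:ℝ) + 1 := by have : (0:ℝ) ≤ (k:ℝ) := Nat.cast_nonneg k; linarith
      nlinarith
    have e1 : ((k:ℝ)+1) * a - 2 = ((k:ℝ)+1)*a - 2 := rfl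
    have e2 : ((k:ℝ)+1) * a / 2 + 1 = m + 1 := by rw [hmdef]
    have e3 : a / 2 * (k:ℝ) + (a/2 - 1) = m - 1 := by rw [hmdef]; ring
    have e4 : a / 2 * (k:ℝ) + a/2 = m := by rw [hmdef]; ring
    rw [e2, e3, e4]
    have expand : (m + 1) * m * w ^ (((k:ℝ)+1) * a - 2) * (lam * t ^ (a / 2)) ^ (k+1) /
        (π ^ 2 * (c * t) ^ (((k:ℝ)+1) * a + 2) * Real.Gamma (m + 1))
        = (w ^ (((k:ℝ)+1)*a - 2) * (lam * t^(a/2))^(k+1) / (π^2 * (c*t)^(((k:ℝ)+1)*a + 2)))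
          * ((m+1) * m / Real.Gamma (m+1)) := by
      ring
    rw [expand, key k, gkey m hm]
    ring
  have hf0 : f 0 = 0 := by simp [hfdef]
  have hsumf : Summable f := by
    rw [← summable_nat_add_iff 1]
    simp only [hterm]
    exact (hsum1.mul_left pre).add (hsum2.mul_left (pre * 2))
  calc (∑' k : ℕ, f k) = f 0 + ∑' k : ℕ, f (k+1) := Summable.tsum_eq_zero_add hsumf
    _ = ∑' k : ℕ, (pre * g1 k + pre * 2 * g2 k) := by rw [hf0, zero_add]; exact tsum_congr hterm
    _ = pre * ∑' k, g1 k + pre * 2 * ∑' k, g2 k := by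
        rw [Summable.tsum_add (hsum1.mul_left pre) (hsum2.mul_left (pre * 2)), tsum_mul_left, tsum_mul_left]
    _ = pre * (ML (a / 2) (a / 2 - 1) z + 2 * ML (a / 2) (a / 2) z) := by
        rw [ML, ML]; ring
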